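/- Let n ≥ 2 and let ρ^{(1)}, …, ρ^{(n)} be arbitrary two-qubit density operators (positive semidefinite matrices with trace 1 on ℂ^2 ⊗ ℂ^2), with ρ^{(i)} placed on registers (A_i, B_i). Let 𝓛 be the completely positive map from 2n qubits to n+1 qubits given by 𝓛(ρ) = Σ_{β ∈ {0,1}^{n−1}} M_β ρ M_β†, where M_β = ( I_{A_1} ⊗ ⟨β|_{A_2…A_n} ⊗ X^{β_1}_{B_2} ⊗ … ⊗ X^{β_{n−1}}_{B_n} ) ( CNOT_n on A_1…A_n ⊗ I_{B_1…B_n} ). Then the fidelity of the output state with respect to the GHZ state satisfies ⟨GHZ_{n+1}| 𝓛(ρ^{(1)} ⊗ ρ^{(2)} ⊗ … ⊗ ρ^{(n)}) |GHZ_{n+1}⟩ = Σ_{z ∈ {0,1}^{n−1}} μ^{(1)}_{z'} · μ^{(2)}_{z_1} · μ^{(3)}_{z_2} · … · μ^{(n)}_{z_{n−1}}, where z' = z_1 ⊕ … ⊕ z_{n−1} and μ^{(i)}_z = ⟨Φ^{z,0}| ρ^{(i)} |Φ^{z,0}⟩. -/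

import Mathlib

open Matrix
open scoped ComplexOrder

/-- Basis labels for registers `A_1, …, A_n, B_1, …, B_n` (`n = n' + 2`). -/
abbrev PairBasis (n : ℕ) : Type := (Fin n → Fin 2) × (Fin n → Fin 2)

/-- Basis labels for the output registers `A_1, B_1, …, B_n`. -/
abbrev OutBasis (n : ℕ) : Type := Fin 2 × (Fin n → Fin 2)

/-- Amplitude of `|GHZ_{n+1}⟩` on registers `A_1, B_1, …, B_n`. -/
noncomputable def ghzA1B (n : ℕ) : OutBasis (n + 2) → ℂ := fun u =>
  ((if u.1 = 0 ∧ u.2 = fun _ => 0 then 1 else 0) +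
      (if u.1 = 1 ∧ u.2 = fun _ => 1 then 1 else 0)) / (Real.sqrt 2 : ℂ)

/-- Amplitude of the Bell basis state `|Φ^{z,x}⟩ = (Z^z X^x ⊗ I)|Φ⟩` at `(u, v)`. -/
noncomputable def bellBasisAmp (z x : Fin 2) (u v : Fin 2) : ℂ :=
  if u = v + x then (-1) ^ (z.val * u.val) * ((Real.sqrt 2 : ℂ))⁻¹ else 0

/-- The Bell basis vector `|Φ^{z,0}⟩` as a two-qubit state vector. -/
noncomputable def bellVec (z : Fin 2) : Fin 2 × Fin 2 → ℂ :=
  fun uv => bellBasisAmp z 0 uv.1 uv.2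

/-- `CNOT_n ⊗ I_B`: `|0⟩⟨0| ⊗ I^{⊗(n-1)} + |1⟩⟨1| ⊗ X^{⊗(n-1)}` on the `A`
registers (control `A_1`), identity on the `B` registers. -/
noncomputable def cnotA (n : ℕ) : Matrix (PairBasis (n + 2)) (PairBasis (n + 2)) ℂ :=
  Matrix.of fun p q =>
    if p.2 = q.2 ∧ p.1 0 = q.1 0 ∧ (∀ i, i ≠ 0 → p.1 i = q.1 i + q.1 0)
    then (1 : ℂ) else 0

/-- The correction operator `⊗_{i=1}^{n-1} X^{β_i}_{B_{i+1}}`. -/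
noncomputable def xCorrB (n : ℕ) (β : Fin (n + 1) → Fin 2) :
    Matrix (PairBasis (n + 2)) (PairBasis (n + 2)) ℂ :=
  Matrix.of fun p q =>
    if p.1 = q.1 ∧ (∀ j, p.2 j = q.2 j + (Fin.cons 0 β : Fin (n + 2) → Fin 2) j)
    then (1 : ℂ) else 0

/-- The Kraus operator
`M_β = (I_{A_1} ⊗ ⟨β|_{A_2 ⋯ A_n} ⊗ X^{β_1}_{B_2} ⊗ ⋯ ⊗ X^{β_{n-1}}_{B_n})(CNOT_n ⊗ I_B)`:
apply `CNOT_n` on the `A` registers and the `X` corrections on the `B` registers,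
then contract `A_2, …, A_n` with the computational bra `⟨β|`. -/
noncomputable def krausM (n : ℕ) (β : Fin (n + 1) → Fin 2) :
    Matrix (OutBasis (n + 2)) (PairBasis (n + 2)) ℂ :=
  Matrix.of fun o p => (xCorrB n β * cnotA n) ((Fin.cons o.1 β, o.2)) p

/-- The LOCC channel `𝓛(ρ) = ∑_{β ∈ {0,1}^{n-1}} M_β ρ M_β†` of Protocol 2. -/
noncomputable def channelL (n : ℕ) (ρ : Matrix (PairBasis (n + 2)) (PairBasis (n + 2)) ℂ) :
    Matrix (OutBasis (n + 2)) (OutBasis (n + 2)) ℂ :=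
  ∑ β : Fin (n + 1) → Fin 2, krausM n β * ρ * (krausM n β)ᴴ

/-- The tensor product `ρ⁽¹⁾ ⊗ ⋯ ⊗ ρ⁽ⁿ⁾` of two-qubit states, `ρ⁽ⁱ⁾` on `(A_i, B_i)`. -/
noncomputable def prodState (n : ℕ)
    (ρ : Fin (n + 2) → Matrix (Fin 2 × Fin 2) (Fin 2 × Fin 2) ℂ) :
    Matrix (PairBasis (n + 2)) (PairBasis (n + 2)) ℂ :=
  Matrix.of fun p q => ∏ i, ρ i (p.1 i, p.2 i) (q.1 i, q.2 i)

/-- The overlap `μ_z = ⟨Φ^{z,0}| ρ |Φ^{z,0}⟩` of a two-qubit state with `|Φ^{z,0}⟩`. -/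
noncomputable def mu (ρ : Matrix (Fin 2 × Fin 2) (Fin 2 × Fin 2) ℂ) (z : Fin 2) : ℂ :=
  star (bellVec z) ⬝ᵥ ρ.mulVec (bellVec z)

/-- **Theorem 6: fidelity after Protocol 2 with noisy Bell pairs.**
For `n ≥ 2` (written `n + 2`) arbitrary two-qubit density operators
`ρ⁽¹⁾, …, ρ⁽ⁿ⁾` on the registers `(A_i, B_i)`,
`⟨GHZ_{n+1}| 𝓛(ρ⁽¹⁾ ⊗ ⋯ ⊗ ρ⁽ⁿ⁾) |GHZ_{n+1}⟩
  = ∑_{z ∈ {0,1}^{n-1}} μ^{(1)}_{z'} μ^{(2)}_{z₁} ⋯ μ^{(n)}_{z_{n-1}}`,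
where `z' = z₁ ⊕ ⋯ ⊕ z_{n-1}` and `μ^{(i)}_z = ⟨Φ^{z,0}| ρ⁽ⁱ⁾ |Φ^{z,0}⟩`. -/
noncomputable def sgn (x : Fin 2) : ℂ := if x = 0 then 1 else -1

lemma sgn_add (x y : Fin 2) : sgn (x + y) = sgn x * sgn y := by
  fin_cases x <;> fin_cases y <;> simp [sgn]

lemma sgn_sum {m : ℕ} (g : Fin m → Fin 2) (s : Finset (Fin m)) :
    sgn (∑ i ∈ s, g i) = ∏ i ∈ s, sgn (g i) := by
  induction s using Finset.induction_on with
  | empty => simp [sgn]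
  | insert _ _ h ih => rw [Finset.sum_insert h, Finset.prod_insert h, sgn_add, ih]

lemma sum_sgn (c : Fin 2) : ∑ w : Fin 2, sgn (w * c) = if c = 0 then 2 else 0 := by
  fin_cases c <;> simp [Fin.sum_univ_two, sgn] <;> norm_num

lemma zsum {m : ℕ} (c : Fin m → Fin 2) :
    ∑ z : Fin m → Fin 2, ∏ i, sgn (z i * c i) = if (∀ i, c i = 0) then (2:ℂ)^m else 0 := by
  rw [← Fintype.piFinset_univ, ← Finset.prod_univ_sum (fun _ => Finset.univ) (fun i w => sgn (w * c i))]
  by_cases h : ∀ i, c i = 0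
  · simp [sum_sgn, h, sgn]
  · push_neg at h
    obtain ⟨i, hi⟩ := h
    rw [if_neg (by push_neg; exact ⟨i, hi⟩)]
    apply Finset.prod_eq_zero (Finset.mem_univ i)
    rw [sum_sgn, if_neg hi]

lemma sqrt2_inv_sq : ((Real.sqrt 2 : ℂ))⁻¹ * ((Real.sqrt 2 : ℂ))⁻¹ = 2⁻¹ := by
  rw [← mul_inv]
  norm_cast
  rw [Real.mul_self_sqrt (by norm_num)]
  norm_num

lemma star_sqrt2_inv : star (((Real.sqrt 2 : ℂ))⁻¹) = ((Real.sqrt 2 : ℂ))⁻¹ := by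
  simp [Complex.star_def, map_inv₀, Complex.conj_ofReal]

lemma mu_eq (ρ : Matrix (Fin 2 × Fin 2) (Fin 2 × Fin 2) ℂ) (z : Fin 2) :
    mu ρ z = (∑ a : Fin 2, ∑ b : Fin 2, sgn (z*a) * sgn (z*b) * ρ (a,a) (b,b)) * 2⁻¹ := by
  have h : ∀ u v : Fin 2, bellVec z (u, v) = if u = v then sgn (z*u) * ((Real.sqrt 2:ℂ))⁻¹ else 0 := by
    intro u v
    simp only [bellVec, bellBasisAmp, add_zero]
    congr 1
    fin_cases z <;> fin_cases u <;> simp [sgn]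
  simp only [mu, dotProduct, mulVec, Pi.star_apply, Fintype.sum_prod_type, h, Fin.sum_univ_two]
  have hs : ∀ x : Fin 2, star (sgn x) = sgn x := by
    intro x
    simp only [sgn]
    split <;> simp
  have hr : star (((Real.sqrt 2:ℂ))⁻¹) = ((Real.sqrt 2:ℂ))⁻¹ := by
    simp [Complex.star_def, map_inv₀, Complex.conj_ofReal]
  simp only [show ((0:Fin 2) = 0) = True by simp, show ((1:Fin 2) = 0) = False by simp,
    show ((0:Fin 2) = 1) = False by simp, show ((1:Fin 2) = 1) = True by simp,
    if_true, if_false, star_zero, zero_mul, mul_zero, add_zero, zero_add, mul_one,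
    star_mul', hs, hr]
  have e2 := sqrt2_inv_sq
  set r := ((Real.sqrt 2:ℂ))⁻¹ with hrdef
  ring_nf
  rw [show r^2 = 2⁻¹ by rw [sq]; exact e2]
  ring

lemma mu_eq' (ρ : Matrix (Fin 2 × Fin 2) (Fin 2 × Fin 2) ℂ) (z : Fin 2) :
    mu ρ z = ∑ p : Fin 2 × Fin 2, sgn (z*p.1) * sgn (z*p.2) * ρ (p.1,p.1) (p.2,p.2) * 2⁻¹ := by
  rw [mu_eq, Finset.sum_mul, Fintype.sum_prod_type]
  exact Finset.sum_congr rfl fun a _ => by rw [Finset.sum_mul]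

lemma rhs_eq (n : ℕ) (ρ : Fin (n + 2) → Matrix (Fin 2 × Fin 2) (Fin 2 × Fin 2) ℂ) :
    ∑ z : Fin (n + 1) → Fin 2,
          mu (ρ 0) (∑ i, z i) * ∏ i : Fin (n + 1), mu (ρ i.succ) (z i)
    = (∑ a : Fin 2, ∑ d : Fin 2, ∑ b : Fin (n+1) → Fin 2,
        ρ 0 (a,a) (a+d,a+d) * ∏ i, ρ i.succ (b i, b i) (b i + d, b i + d)) * 2⁻¹ := by
  have step1 : ∀ z : Fin (n+1) → Fin 2,
      mu (ρ 0) (∑ i, z i) * ∏ i : Fin (n + 1), mu (ρ i.succ) (z i)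
      = ∑ q : Fin 2 × Fin 2, ∑ F : Fin (n+1) → Fin 2 × Fin 2,
          (∏ i, sgn (z i * (q.1 + q.2 + (F i).1 + (F i).2)))
          * (ρ 0 (q.1,q.1) (q.2,q.2) * (∏ i, ρ i.succ ((F i).1,(F i).1) ((F i).2,(F i).2))
              * (2⁻¹ : ℂ)^(n+2)) := by
    intro z
    rw [mu_eq']
    have hprod : (∏ i : Fin (n + 1), mu (ρ i.succ) (z i))
        = ∑ F ∈ Fintype.piFinset (fun _ : Fin (n+1) => (Finset.univ : Finset (Fin 2 × Fin 2))),
            ∏ i, (sgn (z i*(F i).1) * sgn (z i*(F i).2)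
              * ρ i.succ ((F i).1,(F i).1) ((F i).2,(F i).2) * 2⁻¹) := by
      rw [show (∏ i : Fin (n + 1), mu (ρ i.succ) (z i))
            = ∏ i : Fin (n+1), ∑ p ∈ (Finset.univ : Finset (Fin 2 × Fin 2)),
                (sgn (z i*p.1) * sgn (z i*p.2) * ρ i.succ (p.1,p.1) (p.2,p.2) * 2⁻¹)
          from Finset.prod_congr rfl fun i _ => mu_eq' _ _]
      rw [Finset.prod_univ_sum]
    rw [hprod, Finset.sum_mul]
    refine Finset.sum_congr rfl fun q _ => ?_
    rw [Finset.mul_sum, Fintype.piFinset_univ]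
    refine Finset.sum_congr rfl fun F _ => ?_
    have hsplit : (∏ i, (sgn (z i*(F i).1) * sgn (z i*(F i).2)
              * ρ i.succ ((F i).1,(F i).1) ((F i).2,(F i).2) * 2⁻¹))
        = (∏ i, sgn (z i*(F i).1) * sgn (z i*(F i).2))
          * (∏ i, ρ i.succ ((F i).1,(F i).1) ((F i).2,(F i).2)) * (2⁻¹:ℂ)^(n+1) := by
      rw [show ((2:ℂ)⁻¹)^(n+1) = ∏ _i : Fin (n+1), (2⁻¹:ℂ) by simp]
      try rw [← Finset.prod_mul_distrib]
      try rw [← Finset.prod_mul_distrib]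
      try exact Finset.prod_congr rfl fun i _ => by ring
    rw [hsplit]
    have h1 : ∀ a : Fin 2, sgn ((∑ i, z i) * a) = ∏ i, sgn (z i * a) := fun a => by
      rw [Finset.sum_mul]; exact sgn_sum _ _
    have hkey : sgn ((∑ i, z i) * q.1) * sgn ((∑ i, z i) * q.2)
        * ∏ i, (sgn (z i*(F i).1) * sgn (z i*(F i).2))
        = ∏ i, sgn (z i * (q.1 + q.2 + (F i).1 + (F i).2)) := by
      rw [h1, h1, ← Finset.prod_mul_distrib, ← Finset.prod_mul_distrib]
      refine Finset.prod_congr rfl fun i _ => ?_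
      simp only [mul_add, sgn_add]
      ring
    calc sgn ((∑ i, z i) * q.1) * sgn ((∑ i, z i) * q.2) * ρ 0 (q.1,q.1) (q.2,q.2) * 2⁻¹
          * ((∏ i, sgn (z i*(F i).1) * sgn (z i*(F i).2))
            * (∏ i, ρ i.succ ((F i).1,(F i).1) ((F i).2,(F i).2)) * (2⁻¹:ℂ)^(n+1))
        = (sgn ((∑ i, z i) * q.1) * sgn ((∑ i, z i) * q.2)
            * ∏ i, (sgn (z i*(F i).1) * sgn (z i*(F i).2)))
          * (ρ 0 (q.1,q.1) (q.2,q.2) * (∏ i, ρ i.succ ((F i).1,(F i).1) ((F i).2,(F i).2))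
              * (2⁻¹*(2⁻¹:ℂ)^(n+1))) := by ring
      _ = _ := by rw [hkey, ← pow_succ']
  calc (∑ z : Fin (n + 1) → Fin 2,
          mu (ρ 0) (∑ i, z i) * ∏ i : Fin (n + 1), mu (ρ i.succ) (z i))
      = ∑ q : Fin 2 × Fin 2, ∑ F : Fin (n+1) → Fin 2 × Fin 2,
          (∑ z : Fin (n+1) → Fin 2, ∏ i, sgn (z i * (q.1 + q.2 + (F i).1 + (F i).2)))
          * (ρ 0 (q.1,q.1) (q.2,q.2) * (∏ i, ρ i.succ ((F i).1,(F i).1) ((F i).2,(F i).2))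
              * (2⁻¹ : ℂ)^(n+2)) := by
        simp_rw [step1]
        rw [Finset.sum_comm]
        refine Finset.sum_congr rfl fun q _ => ?_
        rw [Finset.sum_comm]
        refine Finset.sum_congr rfl fun F _ => ?_
        rw [Finset.sum_mul]
    _ = ∑ q : Fin 2 × Fin 2, ∑ F : Fin (n+1) → Fin 2 × Fin 2,
          (if (∀ i, (F i).2 = (F i).1 + (q.1 + q.2)) then (2:ℂ)^(n+1) else 0)
          * (ρ 0 (q.1,q.1) (q.2,q.2) * (∏ i, ρ i.succ ((F i).1,(F i).1) ((F i).2,(F i).2))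
              * (2⁻¹ : ℂ)^(n+2)) := by
        refine Finset.sum_congr rfl fun q _ => Finset.sum_congr rfl fun F _ => ?_
        rw [zsum]
        congr 1
        have : ∀ i, (q.1 + q.2 + (F i).1 + (F i).2 = 0) ↔ ((F i).2 = (F i).1 + (q.1 + q.2)) := by
          intro i
          revert q
          rintro ⟨x, y⟩
          revert x y
          generalize (F i).1 = a; generalize (F i).2 = b
          revert a b; decide
        simp only [this]
    _ = _ := by
        rw [Fintype.sum_prod_type, Finset.sum_mul]
        refine Finset.sum_congr rfl fun x _ => ?_
        rw [← Fintype.sum_equiv (Equiv.addLeft x)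
          (fun d => ∑ F : Fin (n+1) → Fin 2 × Fin 2,
            (if (∀ i, (F i).2 = (F i).1 + (x + (x + d))) then (2:ℂ)^(n+1) else 0)
            * (ρ 0 (x,x) (x+d,x+d) * (∏ i, ρ i.succ ((F i).1,(F i).1) ((F i).2,(F i).2))
                * (2⁻¹ : ℂ)^(n+2))) _ (fun d => rfl)]
        rw [Finset.sum_mul]
        refine Finset.sum_congr rfl fun d _ => ?_
        have hxd : x + (x + d) = d := by revert x d; decide
        rw [hxd]
        rw [← Fintype.sum_equiv (Equiv.arrowProdEquivProdArrow (Fin (n+1)) (fun _ => Fin 2) (fun _ => Fin 2)).symm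
          (fun bb : (Fin (n+1) → Fin 2) × (Fin (n+1) → Fin 2) =>
            (if (∀ i, bb.2 i = bb.1 i + d) then (2:ℂ)^(n+1) else 0)
            * (ρ 0 (x,x) (x+d,x+d) * (∏ i, ρ i.succ (bb.1 i, bb.1 i) (bb.2 i, bb.2 i))
                * (2⁻¹ : ℂ)^(n+2))) _ (fun bb => rfl)]
        rw [Fintype.sum_prod_type]
        have h2 : (2:ℂ)^(n+1) * (2⁻¹:ℂ)^(n+2) = 2⁻¹ := by
          rw [inv_pow, ← div_eq_mul_inv, div_eq_iff (by norm_num : ((2:ℂ))^(n+2) ≠ 0),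
            pow_succ (2:ℂ) (n+1)]
          ring
        rw [Finset.sum_mul]
        refine Finset.sum_congr rfl fun b _ => ?_
        have hcond : ∀ b' : Fin (n+1) → Fin 2,
            (∀ i, b' i = b i + d) ↔ b' = fun i => b i + d := fun b' => funext_iff.symm
        simp only [hcond]
        rw [Finset.sum_eq_single (fun i => b i + d)]
        · rw [if_pos rfl]
          simp only []
          linear_combination (ρ 0 (x,x) (x+d,x+d)
            * ∏ i, ρ i.succ (b i, b i) (b i + d, b i + d)) * h2
        · intro b' _ hb'
          rw [if_neg hb', zero_mul]
        · intro h
          exact absurd (Finset.mem_univ _) h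

lemma f2a (a b c : Fin 2) : a = b + c → b = a + c := by revert a b c; decide

lemma f2b (s x : Fin 2) : x = (s + x) + s := by revert s x; decide

lemma f2c (a : Fin 2) : a + 0 = a := by revert a; decide

/-- the bit string `s + (0, β)` -/

lemma f2d (s c : Fin 2) : s = (s + c) + c := by revert s c; decide

def cvec (n : ℕ) (s : Fin 2) (β : Fin (n + 1) → Fin 2) : Fin (n + 2) → Fin 2 :=
  fun j => s + (Fin.cons 0 β : Fin (n + 2) → Fin 2) j

lemma cvec_zero (n s β) : cvec n s β 0 = s := by simp [cvec]

lemma cvec_succ (n s β) (k : Fin (n+1)) : cvec n s β k.succ = s + β k := by simp [cvec]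

lemma kraus_row (n : ℕ) (β : Fin (n+1) → Fin 2) (s : Fin 2) (p : PairBasis (n+2)) :
    krausM n β (s, fun _ => s) p
      = if p = (cvec n s β, cvec n s β) then 1 else 0 := by
  obtain ⟨p1, p2⟩ := p
  have hmul : krausM n β (s, fun _ => s) (p1, p2)
      = ∑ q : PairBasis (n+2),
          xCorrB n β (Fin.cons s β, fun _ => s) q * cnotA n q (p1, p2) := by
    simp [krausM, Matrix.mul_apply]
  rw [hmul]
  have hq0 : ∀ q : PairBasis (n+2),
      xCorrB n β (Fin.cons s β, fun _ => s) q
        = if q = (Fin.cons s β, cvec n s β) then 1 else 0 := by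
    rintro ⟨q1, q2⟩
    simp only [xCorrB, Matrix.of_apply, Prod.mk.injEq]
    refine if_congr ?_ rfl rfl
    constructor
    · rintro ⟨h1, h2⟩
      exact ⟨h1.symm, funext fun j => (f2a _ _ _ (h2 j)).trans rfl⟩
    · rintro ⟨h1, h2⟩
      subst h1; subst h2
      exact ⟨rfl, fun j => f2d s _⟩
  simp only [hq0, ite_mul, one_mul, zero_mul, Finset.sum_ite_eq', Finset.mem_univ, if_true]
  simp only [cnotA, Matrix.of_apply, Prod.mk.injEq]
  refine if_congr ?_ rfl rfl
  constructor
  · rintro ⟨h1, h2, h3⟩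
    have hp0 : p1 0 = s := by rw [← h2, Fin.cons_zero]
    refine ⟨funext fun j => ?_, h1.symm⟩
    refine Fin.cases ?_ (fun k => ?_) j
    · rw [hp0]; exact (cvec_zero n s β).symm
    · have h3' := h3 k.succ (Fin.succ_ne_zero k)
      rw [Fin.cons_succ] at h3'
      rw [f2a _ _ _ h3', hp0, add_comm]
      exact (cvec_succ n s β k).symm
  · rintro ⟨h1, h2⟩
    subst h1; subst h2
    refine ⟨rfl, (cvec_zero n s β).symm, fun i hi => ?_⟩
    obtain ⟨k, rfl⟩ := Fin.exists_succ_eq.mpr hi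
    rw [Fin.cons_succ, cvec_succ, cvec_zero]
    exact f2b s (β k)

lemma kraus_vec (n : ℕ) (β : Fin (n+1) → Fin 2) (p : PairBasis (n+2)) :
    ((krausM n β)ᴴ *ᵥ ghzA1B n) p
      = ((if p = (cvec n 0 β, cvec n 0 β) then 1 else 0)
          + (if p = (cvec n 1 β, cvec n 1 β) then 1 else 0)) * ((Real.sqrt 2 : ℂ))⁻¹ := by
  have hg : ∀ o : OutBasis (n+2), ghzA1B n o
      = ((if o = ((0 : Fin 2), fun _ => (0:Fin 2)) then 1 else 0)
          + (if o = ((1 : Fin 2), fun _ => (1:Fin 2)) then 1 else 0)) * ((Real.sqrt 2 : ℂ))⁻¹ := by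
    intro o
    rw [ghzA1B, div_eq_mul_inv]
    congr 2 <;> exact if_congr (by rw [Prod.ext_iff]) rfl rfl
  have : ((krausM n β)ᴴ *ᵥ ghzA1B n) p
      = ∑ o : OutBasis (n+2), star (krausM n β o p) * ghzA1B n o := by
    simp [mulVec, dotProduct, conjTranspose_apply]
  rw [this]
  have expand : ∀ o : OutBasis (n+2), star (krausM n β o p) * ghzA1B n o
      = (if o = ((0:Fin 2), fun _ => (0:Fin 2)) then star (krausM n β o p) else 0)
          * ((Real.sqrt 2 : ℂ))⁻¹
        + (if o = ((1:Fin 2), fun _ => (1:Fin 2)) then star (krausM n β o p) else 0)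
          * ((Real.sqrt 2 : ℂ))⁻¹ := by
    intro o
    rw [hg]
    split_ifs <;> ring
  simp only [expand, Finset.sum_add_distrib]
  rw [← Finset.sum_mul, ← Finset.sum_mul, Finset.sum_ite_eq', Finset.sum_ite_eq']
  simp only [Finset.mem_univ, if_true]
  rw [← add_mul]
  congr 2 <;> rw [kraus_row, apply_ite star, star_one, star_zero]

lemma dot_ind {I : Type*} [Fintype I] [DecidableEq I] (A : Matrix I I ℂ) (P : Fin 2 → I)
    (v : I → ℂ) (r : ℂ) (hr : star r = r)
    (hv : ∀ p, v p = ((if p = P 0 then 1 else 0) + (if p = P 1 then 1 else 0)) * r) :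
    star v ⬝ᵥ A *ᵥ v = (∑ s : Fin 2, ∑ t : Fin 2, A (P s) (P t)) * (r * r) := by
  have hsv : ∀ p, star (v p) = v p := by
    intro p
    rw [hv, star_mul', hr, star_add, apply_ite star, apply_ite star, star_one, star_zero,
      mul_comm]
  have inner : ∀ p, (∑ q, A p q * v q) = (A p (P 0) + A p (P 1)) * r := by
    intro p
    have e : ∀ q, A p q * (((if q = P 0 then (1:ℂ) else 0) + (if q = P 1 then 1 else 0)) * r)
        = (if q = P 0 then A p q else 0) * r + (if q = P 1 then A p q else 0) * r := by
      intro q; split_ifs <;> ring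
    simp only [hv, e, Finset.sum_add_distrib]
    rw [← Finset.sum_mul, ← Finset.sum_mul, Finset.sum_ite_eq', Finset.sum_ite_eq']
    simp only [Finset.mem_univ, if_true]
    ring
  have e2 : ∀ p, v p * ((A p (P 0) + A p (P 1)) * r)
      = (if p = P 0 then (A p (P 0) + A p (P 1)) else 0) * (r*r)
        + (if p = P 1 then (A p (P 0) + A p (P 1)) else 0) * (r*r) := by
    intro p; rw [hv]; split_ifs <;> ring
  calc star v ⬝ᵥ A *ᵥ v = ∑ p, v p * ((A p (P 0) + A p (P 1)) * r) := by
        simp only [dotProduct, mulVec, Pi.star_apply]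
        exact Finset.sum_congr rfl fun p _ => by rw [hsv, inner]
    _ = _ := by
        simp only [e2, Finset.sum_add_distrib]
        rw [← Finset.sum_mul, ← Finset.sum_mul, Finset.sum_ite_eq', Finset.sum_ite_eq']
        simp only [Finset.mem_univ, if_true, Fin.sum_univ_two]
        ring

lemma sandwich (n : ℕ) (β : Fin (n+1) → Fin 2)
    (R : Matrix (PairBasis (n+2)) (PairBasis (n+2)) ℂ) :
    star (ghzA1B n) ⬝ᵥ (krausM n β * R * (krausM n β)ᴴ) *ᵥ ghzA1B n
    = (∑ s : Fin 2, ∑ t : Fin 2,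
        R (cvec n s β, cvec n s β) (cvec n t β, cvec n t β)) * 2⁻¹ := by
  have h1 : star (ghzA1B n) ⬝ᵥ (krausM n β * R * (krausM n β)ᴴ) *ᵥ ghzA1B n
      = star ((krausM n β)ᴴ *ᵥ ghzA1B n) ⬝ᵥ R *ᵥ ((krausM n β)ᴴ *ᵥ ghzA1B n) := by
    rw [← mulVec_mulVec, ← mulVec_mulVec, dotProduct_mulVec, star_mulVec,
      conjTranspose_conjTranspose]
  rw [h1, dot_ind R (fun s => (cvec n s β, cvec n s β)) _ (((Real.sqrt 2:ℂ))⁻¹)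
    star_sqrt2_inv (kraus_vec n β), sqrt2_inv_sq]

lemma lhs_eq (n : ℕ) (ρ : Fin (n + 2) → Matrix (Fin 2 × Fin 2) (Fin 2 × Fin 2) ℂ) :
    star (ghzA1B n) ⬝ᵥ (channelL n (prodState n ρ)).mulVec (ghzA1B n)
    = (∑ a : Fin 2, ∑ d : Fin 2, ∑ b : Fin (n+1) → Fin 2,
        ρ 0 (a,a) (a+d,a+d) * ∏ i, ρ i.succ (b i, b i) (b i + d, b i + d)) * 2⁻¹ := by
  have hsum : star (ghzA1B n) ⬝ᵥ (channelL n (prodState n ρ)).mulVec (ghzA1B n)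
      = ∑ β : Fin (n+1) → Fin 2,
          star (ghzA1B n) ⬝ᵥ (krausM n β * prodState n ρ * (krausM n β)ᴴ) *ᵥ ghzA1B n := by
    have hmv : (channelL n (prodState n ρ)) *ᵥ ghzA1B n
        = ∑ β : Fin (n+1) → Fin 2,
            (krausM n β * prodState n ρ * (krausM n β)ᴴ) *ᵥ ghzA1B n := by
      rw [channelL]
      ext j
      simp only [mulVec, dotProduct, Matrix.sum_apply, Finset.sum_apply, Finset.sum_mul]
      exact Finset.sum_comm
    rw [show (channelL n (prodState n ρ)).mulVec (ghzA1B n)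
        = (channelL n (prodState n ρ)) *ᵥ ghzA1B n from rfl, hmv]
    simp only [dotProduct, Finset.sum_apply, Finset.mul_sum]
    exact Finset.sum_comm
  rw [hsum]
  simp only [sandwich]
  rw [← Finset.sum_mul]
  congr 1
  have hps : ∀ (s t : Fin 2) (β : Fin (n+1) → Fin 2),
      prodState n ρ (cvec n s β, cvec n s β) (cvec n t β, cvec n t β)
      = ∏ i : Fin (n+2), ρ i (cvec n s β i, cvec n s β i) (cvec n t β i, cvec n t β i) := by
    intro s t β; rfl
  calc ∑ β : Fin (n+1) → Fin 2, ∑ s : Fin 2, ∑ t : Fin 2,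
          prodState n ρ (cvec n s β, cvec n s β) (cvec n t β, cvec n t β)
      = ∑ s : Fin 2, ∑ d : Fin 2, ∑ β : Fin (n+1) → Fin 2,
          ρ 0 (s,s) (s+d,s+d) * ∏ i : Fin (n+1),
            ρ i.succ (s + β i, s + β i) ((s + β i) + d, (s + β i) + d) := by
        rw [Finset.sum_comm]
        refine Finset.sum_congr rfl fun s _ => ?_
        rw [Finset.sum_comm]
        refine ((Fintype.sum_equiv (Equiv.addLeft s)
          (fun d => ∑ β : Fin (n+1) → Fin 2,
            prodState n ρ (cvec n s β, cvec n s β) (cvec n (s + d) β, cvec n (s + d) β))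
          (fun t => ∑ β : Fin (n+1) → Fin 2,
            prodState n ρ (cvec n s β, cvec n s β) (cvec n t β, cvec n t β))
          (fun d => rfl)).symm).trans ?_
        refine Finset.sum_congr rfl fun d _ => Finset.sum_congr rfl fun β _ => ?_
        rw [hps, Fin.prod_univ_succ]
        have hc0 : cvec n s β 0 = s := cvec_zero n s β
        have hc0' : cvec n (s + d) β 0 = s + d := cvec_zero n _ β
        have hcs : ∀ k, cvec n s β k.succ = s + β k := cvec_succ n s β
        have hcs' : ∀ k, cvec n (s + d) β k.succ = (s + β k) + d := by
          intro k
          rw [cvec_succ]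
          show s + d + β k = s + β k + d
          rw [add_assoc, add_comm d (β k), ← add_assoc]
        rw [hc0, hc0']
        congr 1
        exact Finset.prod_congr rfl fun k _ => by rw [hcs, hcs']
    _ = _ := by
        refine Finset.sum_congr rfl fun s _ => Finset.sum_congr rfl fun d _ => ?_
        exact Fintype.sum_equiv (Equiv.piCongrRight (fun _ => Equiv.addLeft s))
          _ _ (fun β => rfl)

theorem fidelity_after_protocol2 (n : ℕ)
    (ρ : Fin (n + 2) → Matrix (Fin 2 × Fin 2) (Fin 2 × Fin 2) ℂ)
    (hpsd : ∀ i, (ρ i).PosSemidef) (htr : ∀ i, (ρ i).trace = 1) :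
    star (ghzA1B n) ⬝ᵥ (channelL n (prodState n ρ)).mulVec (ghzA1B n)
      = ∑ z : Fin (n + 1) → Fin 2,
          mu (ρ 0) (∑ i, z i) * ∏ i : Fin (n + 1), mu (ρ i.succ) (z i) :=
  (lhs_eq n ρ).trans (rhs_eq n ρ).symm
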